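/- Every 5-dimensional linear subspace W of ℝ⁷ contains a 3-dimensional associative subspace and a 4-dimensional coassociative subspace. -/

import Mathlib

/-- The elementary 3-form `e^{abc}` on `ℝ⁷` evaluated on `(X, Y, Z)`:
the determinant of the matrix of the `a, b, c` components. -/
def eTriple (a b c : Fin 7) (X Y Z : EuclideanSpace ℝ (Fin 7)) : ℝ :=
  Matrix.det !![X a, X b, X c; Y a, Y b, Y c; Z a, Z b, Z c]

/-- The standard `G₂` 3-form
`φ₀ = e¹²³ − e¹∧(e⁴⁵+e⁶⁷) − e²∧(e⁴⁶+e⁷⁵) − e³∧(e⁴⁷+e⁵⁶)` on `ℝ⁷`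
(indices written `1,…,7`, shifted here to `0,…,6`). -/
def phiZero (X Y Z : EuclideanSpace ℝ (Fin 7)) : ℝ :=
  eTriple 0 1 2 X Y Z - eTriple 0 3 4 X Y Z - eTriple 0 5 6 X Y Z
    - eTriple 1 3 5 X Y Z - eTriple 1 6 4 X Y Z
    - eTriple 2 3 6 X Y Z - eTriple 2 4 5 X Y Z

/-- The cross product on `ℝ⁷`, characterised by `⟪X × Y, Z⟫ = φ₀(X, Y, Z)`. -/
noncomputable def crossG2 (X Y : EuclideanSpace ℝ (Fin 7)) : EuclideanSpace ℝ (Fin 7) :=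
  WithLp.toLp 2 (fun i => phiZero X Y (EuclideanSpace.single i 1))

/-- A 3-dimensional subspace is associative if it is closed under the cross product. -/
def IsAssociative (A : Submodule ℝ (EuclideanSpace ℝ (Fin 7))) : Prop :=
  Module.finrank ℝ A = 3 ∧ ∀ x ∈ A, ∀ y ∈ A, crossG2 x y ∈ A

/-- A 4-dimensional subspace is coassociative if its orthogonal complement is
associative. -/
def IsCoassociative (C : Submodule ℝ (EuclideanSpace ℝ (Fin 7))) : Prop :=
  Module.finrank ℝ C = 4 ∧ IsAssociative Cᗮ

local notation "E7" => EuclideanSpace ℝ (Fin 7)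
open RealInnerProductSpace Module Submodule

section CrossLemmas

lemma e7_ext (a b : E7) (h0 : a 0 = b 0) (h1 : a 1 = b 1) (h2 : a 2 = b 2) (h3 : a 3 = b 3)
    (h4 : a 4 = b 4) (h5 : a 5 = b 5) (h6 : a 6 = b 6) : a = b := by
  apply PiLp.ext
  intro i
  fin_cases i
  exacts [h0, h1, h2, h3, h4, h5, h6]

lemma crossC0 (x y : E7) : crossG2 x y 0 =
    x 1 * y 2 - x 2 * y 1 - (x 3 * y 4 - x 4 * y 3) - (x 5 * y 6 - x 6 * y 5) := by
  simp [crossG2, phiZero, eTriple, Matrix.det_fin_three, EuclideanSpace.single_apply]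
  try ring

lemma crossC1 (x y : E7) : crossG2 x y 1 =
    x 2 * y 0 - x 0 * y 2 - (x 3 * y 5 - x 5 * y 3) - (x 6 * y 4 - x 4 * y 6) := by
  simp [crossG2, phiZero, eTriple, Matrix.det_fin_three, EuclideanSpace.single_apply]
  try ring

lemma crossC2 (x y : E7) : crossG2 x y 2 =
    x 0 * y 1 - x 1 * y 0 - (x 3 * y 6 - x 6 * y 3) - (x 4 * y 5 - x 5 * y 4) := by
  simp [crossG2, phiZero, eTriple, Matrix.det_fin_three, EuclideanSpace.single_apply]
  try ring

lemma crossC3 (x y : E7) : crossG2 x y 3 =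
    x 0 * y 4 - x 4 * y 0 + (x 1 * y 5 - x 5 * y 1) + (x 2 * y 6 - x 6 * y 2) := by
  simp [crossG2, phiZero, eTriple, Matrix.det_fin_three, EuclideanSpace.single_apply]
  try ring

lemma crossC4 (x y : E7) : crossG2 x y 4 =
    x 3 * y 0 - x 0 * y 3 + (x 6 * y 1 - x 1 * y 6) + (x 2 * y 5 - x 5 * y 2) := by
  simp [crossG2, phiZero, eTriple, Matrix.det_fin_three, EuclideanSpace.single_apply]
  try ring

lemma crossC5 (x y : E7) : crossG2 x y 5 =
    x 0 * y 6 - x 6 * y 0 + (x 3 * y 1 - x 1 * y 3) + (x 4 * y 2 - x 2 * y 4) := by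
  simp [crossG2, phiZero, eTriple, Matrix.det_fin_three, EuclideanSpace.single_apply]
  try ring

lemma crossC6 (x y : E7) : crossG2 x y 6 =
    x 5 * y 0 - x 0 * y 5 + (x 1 * y 4 - x 4 * y 1) + (x 3 * y 2 - x 2 * y 3) := by
  simp [crossG2, phiZero, eTriple, Matrix.det_fin_three, EuclideanSpace.single_apply]
  try ring

lemma cross_add_right (x y z : E7) : crossG2 x (y + z) = crossG2 x y + crossG2 x z := by
  apply e7_ext <;>
    · simp only [crossC0, crossC1, crossC2, crossC3, crossC4, crossC5, crossC6,
        PiLp.add_apply]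
      ring

lemma cross_smul_right (c : ℝ) (x y : E7) : crossG2 x (c • y) = c • crossG2 x y := by
  apply e7_ext <;>
    · simp only [crossC0, crossC1, crossC2, crossC3, crossC4, crossC5, crossC6,
        PiLp.smul_apply, smul_eq_mul]
      ring

lemma cross_add_left (x y z : E7) : crossG2 (x + y) z = crossG2 x z + crossG2 y z := by
  apply e7_ext <;>
    · simp only [crossC0, crossC1, crossC2, crossC3, crossC4, crossC5, crossC6,
        PiLp.add_apply]
      ring

lemma cross_smul_left (c : ℝ) (x y : E7) : crossG2 (c • x) y = c • crossG2 x y := by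
  apply e7_ext <;>
    · simp only [crossC0, crossC1, crossC2, crossC3, crossC4, crossC5, crossC6,
        PiLp.smul_apply, smul_eq_mul]
      ring

lemma crossG2_antisymm (x y : E7) : crossG2 y x = - crossG2 x y := by
  apply e7_ext <;>
    · simp only [crossC0, crossC1, crossC2, crossC3, crossC4, crossC5, crossC6,
        PiLp.neg_apply]
      ring

lemma crossG2_self (x : E7) : crossG2 x x = 0 := by
  apply e7_ext <;>
    · simp only [crossC0, crossC1, crossC2, crossC3, crossC4, crossC5, crossC6,
        PiLp.zero_apply]
      ring

lemma cross_zero_left (y : E7) : crossG2 0 y = 0 := by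
  have h : (0 : E7) = (0 : ℝ) • (0 : E7) := by simp
  rw [h, cross_smul_left]
  simp

lemma cross_zero_right (x : E7) : crossG2 x 0 = 0 := by
  have h : (0 : E7) = (0 : ℝ) • (0 : E7) := by simp
  rw [h, cross_smul_right]
  simp

lemma inner_cross_left (x y : E7) : ⟪crossG2 x y, x⟫ = 0 := by
  simp only [PiLp.inner_apply, RCLike.inner_apply, conj_trivial, Fin.sum_univ_seven,
    crossC0, crossC1, crossC2, crossC3, crossC4, crossC5, crossC6]
  ring

lemma inner_cross_right (x y : E7) : ⟪crossG2 x y, y⟫ = 0 := by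
  simp only [PiLp.inner_apply, RCLike.inner_apply, conj_trivial, Fin.sum_univ_seven,
    crossC0, crossC1, crossC2, crossC3, crossC4, crossC5, crossC6]
  ring

lemma inner_cross_cross (x y : E7) :
    ⟪crossG2 x y, crossG2 x y⟫ = ⟪x, x⟫ * ⟪y, y⟫ - ⟪x, y⟫ * ⟪x, y⟫ := by
  simp only [PiLp.inner_apply, RCLike.inner_apply, conj_trivial, Fin.sum_univ_seven,
    crossC0, crossC1, crossC2, crossC3, crossC4, crossC5, crossC6]
  ring

lemma cross_cross_self (x y : E7) :
    crossG2 x (crossG2 x y) = ⟪x, y⟫ • x - ⟪x, x⟫ • y := by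
  apply e7_ext <;>
    · simp only [crossC0, crossC1, crossC2, crossC3, crossC4, crossC5, crossC6,
        PiLp.sub_apply, PiLp.smul_apply, smul_eq_mul, PiLp.inner_apply,
        RCLike.inner_apply, conj_trivial, Fin.sum_univ_seven]
      ring

/-- The cross product with a fixed left factor, as a linear map. -/
noncomputable def crossL (x : E7) : E7 →ₗ[ℝ] E7 where
  toFun := crossG2 x
  map_add' := cross_add_right x
  map_smul' c y := cross_smul_right c x y

@[simp] lemma crossL_apply (x y : E7) : crossL x y = crossG2 x y := rfl

end CrossLemmas

section AssocSpan

/-- The span of an orthonormal pair together with its cross product is associative. -/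
lemma assoc_span (x y : E7) (hxx : ⟪x, x⟫ = 1) (hyy : ⟪y, y⟫ = 1) (hxy : ⟪x, y⟫ = 0) :
    IsAssociative (span ℝ {x, y, crossG2 x y}) := by
  set z := crossG2 x y with hz
  have hyx : ⟪y, x⟫ = 0 := by rw [real_inner_comm]; exact hxy
  have hzx : ⟪z, x⟫ = 0 := inner_cross_left x y
  have hzy : ⟪z, y⟫ = 0 := inner_cross_right x y
  have hzz : ⟪z, z⟫ = 1 := by
    rw [hz, inner_cross_cross, hxx, hyy, hxy]; ring
  -- products among generators
  have pxy : crossG2 x y = z := rfl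
  have pyx : crossG2 y x = -z := by rw [crossG2_antisymm, pxy]
  have pxz : crossG2 x z = -y := by
    rw [hz, cross_cross_self, hxy, hxx]; simp
  have pzx : crossG2 z x = y := by rw [crossG2_antisymm, pxz]; simp
  have pyz : crossG2 y z = x := by
    have h1 : z = (-1 : ℝ) • crossG2 y x := by rw [pyx]; simp
    rw [h1, cross_smul_right, cross_cross_self, hyx, hyy]
    simp
  have pzy : crossG2 z y = -x := by rw [crossG2_antisymm, pyz]
  -- A and memberships
  set A := span ℝ ({x, y, z} : Set E7) with hA
  have hxA : x ∈ A := subset_span (by simp)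
  have hyA : y ∈ A := subset_span (by simp)
  have hzA : z ∈ A := subset_span (by simp)
  constructor
  · -- finrank = 3
    have horth : Orthonormal ℝ ![x, y, z] := by
      rw [orthonormal_iff_ite]
      intro i j
      fin_cases i <;> fin_cases j <;>
        simp_all [real_inner_self_eq_norm_sq, real_inner_comm x y, real_inner_comm x z,
          real_inner_comm y z]
    have hli := horth.linearIndependent
    have hr : Set.range ![x, y, z] = {x, y, z} := by
      ext w
      constructor
      · rintro ⟨i, rfl⟩; fin_cases i <;> simp
      · rintro (rfl | rfl | rfl)
        exacts [⟨0, rfl⟩, ⟨1, rfl⟩, ⟨2, rfl⟩]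
    have hcard := finrank_span_eq_card (R := ℝ) hli
    rw [hr] at hcard
    rw [hA, hcard]
    simp
  · -- closure under cross product
    intro a ha b hb
    induction ha, hb using Submodule.span_induction₂ with
    | mem_mem u v hu hv =>
      rcases hu with rfl | rfl | rfl <;> rcases hv with rfl | rfl | rfl
      · rw [crossG2_self]; exact A.zero_mem
      · rw [pxy]; exact hzA
      · rw [pxz]; exact A.neg_mem hyA
      · rw [pyx]; exact A.neg_mem hzA
      · rw [crossG2_self]; exact A.zero_mem
      · rw [pyz]; exact hxA
      · rw [pzx]; exact hyA
      · rw [pzy]; exact A.neg_mem hxA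
      · rw [crossG2_self]; exact A.zero_mem
    | zero_left v hv =>
      rw [cross_zero_left]; exact A.zero_mem
    | zero_right u hu =>
      rw [cross_zero_right]; exact A.zero_mem
    | add_left u v w hu hv hw h1 h2 =>
      rw [cross_add_left]; exact A.add_mem h1 h2
    | add_right u v w hu hv hw h1 h2 =>
      rw [cross_add_right]; exact A.add_mem h1 h2
    | smul_left c u v hu hv h =>
      rw [cross_smul_left]; exact A.smul_mem c h
    | smul_right c u v hu hv h =>
      rw [cross_smul_right]; exact A.smul_mem c h

end AssocSpan

/-- Every 5-dimensional subspace of `(ℝ⁷, φ₀)` contains both an associative and a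
coassociative subspace. -/
theorem five_dim_contains_assoc_and_coassoc
    (W : Submodule ℝ (EuclideanSpace ℝ (Fin 7)))
    (hW : Module.finrank ℝ W = 5) :
    (∃ A : Submodule ℝ (EuclideanSpace ℝ (Fin 7)), A ≤ W ∧ IsAssociative A) ∧
    (∃ C : Submodule ℝ (EuclideanSpace ℝ (Fin 7)), C ≤ W ∧ IsCoassociative C) := by
  have htot : finrank ℝ E7 = 7 := finrank_euclideanSpace_fin
  have hWo : finrank ℝ Wᗮ = 2 := by
    have := W.finrank_add_finrank_orthogonal
    omega
  constructor
  · -- associative part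
    have hWbot : W ≠ ⊥ := by
      intro h; rw [h] at hW; simp at hW
    obtain ⟨x₀, hx₀W, hx₀⟩ := Submodule.exists_mem_ne_zero_of_ne_bot hWbot
    set x : E7 := ‖x₀‖⁻¹ • x₀ with hxdef
    have hxW : x ∈ W := W.smul_mem _ hx₀W
    have hx₀n : ‖x₀‖ ≠ 0 := norm_ne_zero_iff.mpr hx₀
    have hxx : ⟪x, x⟫ = 1 := by
      rw [hxdef, real_inner_smul_left, real_inner_smul_right, real_inner_self_eq_norm_sq]
      field_simp
    set S : W →ₗ[ℝ] Wᗮ × ℝ :=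
      LinearMap.prod
        ((orthogonalProjection Wᗮ).toLinearMap.comp ((crossL x).comp W.subtype))
        ((innerₗ E7 x).comp W.subtype) with hS
    have hker : LinearMap.ker S ≠ ⊥ := by
      intro h
      have hinj : Function.Injective S := LinearMap.ker_eq_bot.mp h
      have hle := LinearMap.finrank_le_finrank_of_injective hinj
      rw [hW] at hle
      have hprod : finrank ℝ (Wᗮ × ℝ) = 3 := by
        rw [Module.finrank_prod, hWo, Module.finrank_self]
      omega
    obtain ⟨y₀, hy₀ker, hy₀⟩ := Submodule.exists_mem_ne_zero_of_ne_bot hker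
    have hy₀S : S y₀ = 0 := hy₀ker
    have hproj : orthogonalProjection Wᗮ (crossG2 x ↑y₀) = 0 := by
      have := congrArg Prod.fst hy₀S
      simpa [hS] using this
    have hip : ⟪x, (y₀ : E7)⟫ = 0 := by
      have := congrArg Prod.snd hy₀S
      simp [hS, innerₗ] at this
      exact this
    have hcrossW : crossG2 x ↑y₀ ∈ W := by
      have h1 : crossG2 x ↑y₀ ∈ Wᗮᗮ := Submodule.orthogonalProjectionOnto_eq_zero_iff.mp hproj
      rwa [Submodule.orthogonal_orthogonal] at h1
    have hy₀E : (y₀ : E7) ≠ 0 := by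
      intro h
      exact hy₀ (Subtype.ext h)
    have hy₀n : ‖(y₀ : E7)‖ ≠ 0 := norm_ne_zero_iff.mpr hy₀E
    set y : E7 := ‖(y₀ : E7)‖⁻¹ • (y₀ : E7) with hydef
    have hyW : y ∈ W := W.smul_mem _ y₀.2
    have hyy : ⟪y, y⟫ = 1 := by
      rw [hydef, real_inner_smul_left, real_inner_smul_right, real_inner_self_eq_norm_sq]
      field_simp
    have hxy : ⟪x, y⟫ = 0 := by
      rw [hydef, real_inner_smul_right, hip, mul_zero]
    refine ⟨span ℝ {x, y, crossG2 x y}, ?_, assoc_span x y hxx hyy hxy⟩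
    rw [Submodule.span_le]
    rintro w (rfl | rfl | rfl)
    · exact hxW
    · exact hyW
    · have hc : crossG2 x y = ‖(y₀ : E7)‖⁻¹ • crossG2 x ↑y₀ := by
        rw [hydef, cross_smul_right]
      rw [hc]
      exact W.smul_mem _ hcrossW
  · -- coassociative part
    set b := (stdOrthonormalBasis ℝ Wᗮ).reindex (finCongr hWo) with hb
    set u : E7 := (b 0 : E7) with hu
    set v : E7 := (b 1 : E7) with hv
    have hbo := b.orthonormal
    rw [orthonormal_iff_ite] at hbo
    have huu : ⟪u, u⟫ = 1 := by
      have := hbo 0 0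
      rw [Submodule.coe_inner] at this
      exact this.trans (by simp)
    have hvv : ⟪v, v⟫ = 1 := by
      have := hbo 1 1
      rw [Submodule.coe_inner] at this
      exact this.trans (by simp)
    have huv : ⟪u, v⟫ = 0 := by
      have := hbo 0 1
      rw [Submodule.coe_inner] at this
      exact this.trans (by simp)
    set A' := span ℝ ({u, v, crossG2 u v} : Set E7) with hA'
    have hassoc : IsAssociative A' := assoc_span u v huu hvv huv
    have huA : u ∈ A' := subset_span (by simp)
    have hvA : v ∈ A' := subset_span (by simp)
    have hWoA : Wᗮ ≤ A' := by
      intro w hw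
      have hrepr := b.sum_repr ⟨w, hw⟩
      rw [Fin.sum_univ_two] at hrepr
      have hcoe : w = b.repr ⟨w, hw⟩ 0 • u + b.repr ⟨w, hw⟩ 1 • v := by
        have := congrArg (Subtype.val) hrepr
        simpa [hu, hv] using this.symm
      rw [hcoe]
      exact A'.add_mem (A'.smul_mem _ huA) (A'.smul_mem _ hvA)
    refine ⟨A'ᗮ, ?_, ?_, ?_⟩
    · calc A'ᗮ ≤ Wᗮᗮ := Submodule.orthogonal_le hWoA
        _ = W := Submodule.orthogonal_orthogonal W
    · have h3 : finrank ℝ A' = 3 := hassoc.1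
      have h4 := A'.finrank_add_finrank_orthogonal
      omega
    · rw [Submodule.orthogonal_orthogonal]
      exact hassoc
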